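/- Suppose S_∞ = ∅ and σ is a finite sequence with least ordinal β(σ) such that σ ∉ S_{β(σ)}. Then any two infinite extensions f, g of σ with f, g ∈ [S_{β(σ)−1}] satisfy: f ∈ S if and only if g ∈ S. -/

import Mathlib

open Ordinal Filter Topology

/-- The first `n` values of `f` as a finite sequence. -/
def seg (f : ℕ → ℕ) (n : ℕ) : List ℕ := (List.range n).map f

/-- `[X]`: the set of infinite sequences all of whose initial segments lie in `X`. -/
def ext (X : Set (List ℕ)) : Set (ℕ → ℕ) := {f | ∀ n, seg f n ∈ X}

/-- `σ` is an initial segment of `f`. -/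
def isInit (σ : List ℕ) (f : ℕ → ℕ) : Prop := seg f σ.length = σ

/-- One step of the derivative process relative to `S`. -/
def derivStep (S : Set (ℕ → ℕ)) (X : Set (List ℕ)) : Set (List ℕ) :=
  {x ∈ X | ∃ f g : ℕ → ℕ, f ∈ ext X ∧ g ∈ ext X ∧ isInit x f ∧ isInit x g ∧ f ∈ S ∧ g ∉ S}

/-- The transfinite sequence `S_α`. -/
noncomputable def dSeq (S : Set (ℕ → ℕ)) (α : Ordinal.{0}) : Set (List ℕ) :=
  Ordinal.limitRecOn α Set.univ (fun _ X => derivStep S X)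
    (fun o _ ih => ⋂ (β : Set.Iio o), ih β.1 β.2)

/-- `α(S)`: the least ordinal where the process stabilizes. -/
noncomputable def kernelOrd (S : Set (ℕ → ℕ)) : Ordinal.{0} :=
  sInf {α | dSeq S α = dSeq S (α + 1)}

/-- `S_∞`, the kernel. -/
noncomputable def kernel (S : Set (ℕ → ℕ)) : Set (List ℕ) := dSeq S (kernelOrd S)

/-- `β(σ)`: the least ordinal `α` with `σ ∉ S_α`. -/
noncomputable def bOrd (S : Set (ℕ → ℕ)) (σ : List ℕ) : Ordinal.{0} :=
  sInf {α | σ ∉ dSeq S α}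

open Classical in
/-- `S` is guessable. -/
def Guessable (S : Set (ℕ → ℕ)) : Prop :=
  ∃ G : List ℕ → ℕ, ∀ f : ℕ → ℕ,
    Tendsto (fun n => G (seg f n)) atTop (𝓝 (if f ∈ S then 1 else 0))

/-- `Δ⁰₂`: both a countable union of closed sets and a countable intersection of open sets. -/
def IsDelta02 (S : Set (ℕ → ℕ)) : Prop :=
  (∃ F : ℕ → Set (ℕ → ℕ), (∀ n, IsClosed (F n)) ∧ S = ⋃ n, F n) ∧
  (∃ U : ℕ → Set (ℕ → ℕ), (∀ n, IsOpen (U n)) ∧ S = ⋂ n, U n)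



lemma dSeq_succ' (S : Set (ℕ → ℕ)) (β : Ordinal.{0}) :
    dSeq S (β + 1) = derivStep S (dSeq S β) := by
  rw [dSeq, dSeq, Ordinal.add_one_eq_succ, Ordinal.limitRecOn_succ]

lemma one_add_le_add_one (c : Ordinal.{0}) : 1 + c ≤ c + 1 := by
  rcases lt_or_ge c Ordinal.omega0 with hlt | hge
  · obtain ⟨n, rfl⟩ := Ordinal.lt_omega0.1 hlt
    rw [← Nat.cast_one, ← Nat.cast_add, ← Nat.cast_add, Nat.add_comm]
  · rw [Ordinal.one_add_of_omega0_le hge]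
    exact le_self_add

theorem stmt16 (S : Set (ℕ → ℕ)) (h : kernel S = ∅) (σ : List ℕ)
    (f g : ℕ → ℕ) (hfσ : isInit σ f) (hgσ : isInit σ g)
    (hf : f ∈ ext (dSeq S (bOrd S σ - 1)))
    (hg : g ∈ ext (dSeq S (bOrd S σ - 1))) :
    f ∈ S ↔ g ∈ S := by
  set b := bOrd S σ with hb
  set c := b - 1 with hc
  have hkernel : σ ∉ dSeq S (kernelOrd S) := by
    have h' : dSeq S (kernelOrd S) = ∅ := h
    simp [h']
  have hσb : σ ∉ dSeq S b := by
    rw [hb, bOrd]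
    exact csInf_mem (s := {α | σ ∉ dSeq S α}) ⟨_, hkernel⟩
  have hσc : σ ∈ dSeq S c := by
    have := hf σ.length
    rwa [hfσ] at this
  have hcb : c < b := by
    rcases lt_or_eq_of_le (Ordinal.sub_le_self b 1) with h' | h'
    · exact h'
    · exact absurd (h' ▸ hσc) hσb
  have hbc : b = c + 1 := by
    have h1 : b ≤ 1 + c := Ordinal.le_add_sub b 1
    have h2 : c + 1 ≤ b := by
      rw [Ordinal.add_one_eq_succ]
      exact Order.succ_le_of_lt hcb
    exact le_antisymm (h1.trans (one_add_le_add_one c)) h2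
  have hderiv : dSeq S b = derivStep S (dSeq S c) := by
    rw [hbc, dSeq_succ']
  by_contra hiff
  rcases Classical.em (f ∈ S) with hfS | hfS
  · have hgS : g ∉ S := fun hgS => hiff ⟨fun _ => hgS, fun _ => hfS⟩
    exact hσb (hderiv ▸ ⟨hσc, f, g, hf, hg, hfσ, hgσ, hfS, hgS⟩)
  · have hgS : g ∈ S := by
      by_contra hgS
      exact hiff ⟨fun h' => absurd h' hfS, fun h' => absurd h' hgS⟩
    exact hσb (hderiv ▸ ⟨hσc, g, f, hg, hf, hgσ, hfσ, hgS, hfS⟩)
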